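/- For any 3×3 matrices A and B, the derivative at ε = 0 of ε ↦ e^{A+εB} equals ∫_0^1 e^{(1-ξ)A} B e^{ξA} dξ. -/

import Mathlib

open Matrix intervalIntegral

attribute [local instance] Matrix.linftyOpNormedAddCommGroup Matrix.linftyOpNormedRing
  Matrix.linftyOpNormedAlgebra

open NormedSpace in
/-- Duhamel's formula. -/
theorem duhamel (A N : Matrix (Fin 3) (Fin 3) ℝ) :
    exp N - exp A =
      ∫ ξ in (0:ℝ)..1, exp ((1 - ξ) • A) * (N - A) * exp (ξ • N) := by
  have key : ∀ ξ ∈ Set.uIcc (0:ℝ) 1,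
      HasDerivAt (fun ξ : ℝ => exp ((1 - ξ) • A) * exp (ξ • N))
        (exp ((1 - ξ) • A) * (N - A) * exp (ξ • N)) ξ := by
    intro ξ _
    have h1 : HasDerivAt (fun ξ : ℝ => exp ((1 - ξ) • A))
        ((-1 : ℝ) • (exp ((1 - ξ) • A) * A)) ξ :=
      (hasDerivAt_exp_smul_const A (1 - ξ)).scomp ξ
        (((hasDerivAt_id ξ).const_sub 1))
    have h2 : HasDerivAt (fun ξ : ℝ => exp (ξ • N)) (N * exp (ξ • N)) ξ :=
      hasDerivAt_exp_smul_const' N ξ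
    have := h1.mul h2
    refine this.congr_deriv ?_
    simp only [neg_smul, one_smul, sub_mul, mul_sub, mul_assoc, neg_mul]
    abel
  have hcont : Continuous fun ξ : ℝ =>
      exp ((1 - ξ) • A) * (N - A) * exp (ξ • N) := by
    have he := exp_continuous (𝔸 := Matrix (Fin 3) (Fin 3) ℝ)
    fun_prop
  have := intervalIntegral.integral_eq_sub_of_hasDerivAt key (hcont.intervalIntegrable 0 1)
  rw [this]
  simp [exp_zero]

/-- The derivative at `ε = 0` of `ε ↦ e^{A+εB}` equals `∫_0^1 e^{(1-ξ)A} B e^{ξA} dξ`. -/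
theorem stmt2 (A B : Matrix (Fin 3) (Fin 3) ℝ) :
    HasDerivAt (fun ε : ℝ => NormedSpace.exp (A + ε • B))
      (∫ ξ in (0:ℝ)..1,
        NormedSpace.exp ((1 - ξ) • A) * B * NormedSpace.exp (ξ • A)) 0 := by
  set g : ℝ → Matrix (Fin 3) (Fin 3) ℝ := fun ε =>
    ∫ ξ in (0:ℝ)..1,
      NormedSpace.exp ((1 - ξ) • A) * B * NormedSpace.exp (ξ • (A + ε • B)) with hg
  have hkey : ∀ ε : ℝ, NormedSpace.exp (A + ε • B) - NormedSpace.exp A = ε • g ε := by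
    intro ε
    rw [duhamel A (A + ε • B), hg]
    rw [← intervalIntegral.integral_smul]
    congr 1
    ext ξ
    simp [add_sub_cancel_left, mul_smul_comm, smul_mul_assoc]
  have hgc : Continuous g := by
    have he := NormedSpace.exp_continuous (𝔸 := Matrix (Fin 3) (Fin 3) ℝ)
    have hc : Continuous (Function.uncurry fun (ε ξ : ℝ) =>
        NormedSpace.exp ((1 - ξ) • A) * B * NormedSpace.exp (ξ • (A + ε • B))) := by
      fun_prop
    exact intervalIntegral.continuous_parametric_intervalIntegral_of_continuous' hc 0 1
  refine hasDerivAt_iff_tendsto_slope.2 ?_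
  have h0 : g 0 = ∫ ξ in (0:ℝ)..1,
      NormedSpace.exp ((1 - ξ) • A) * B * NormedSpace.exp (ξ • A) := by
    simp [hg]
  rw [← h0]
  apply Filter.Tendsto.congr' _ ((hgc.tendsto 0).mono_left nhdsWithin_le_nhds)
  filter_upwards [self_mem_nhdsWithin] with ε hε
  have : ε ≠ 0 := hε
  simp [slope_def_field, slope, hkey ε, smul_smul, inv_mul_cancel₀ this, vsub_eq_sub]
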